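/- For every pair of positive integers k ≥ 2 and p ≥ 1 there exists a finite family ℱ(k,p) of graphs such that: any graph G whose minimum edge-degree (minimum number of triangles containing an edge) is at least p·k³ + (p−3)·k + 1 is the line graph of some k-uniform hypergraph with multiplicity at most p if and only if G has no induced subgraph isomorphic to a member of ℱ(k,p). -/

import Mathlib

namespace LGAux
open Finset

/-- `G` is the line graph of a `k`-uniform hypergraph with multiplicity at most `p`. -/
def IsLG (k p : ℕ) {V : Type} (G : SimpleGraph V) : Prop :=
  ∃ (nX : ℕ) (H : Finset (Finset (Fin nX))),
    (∀ e ∈ H, e.card = k) ∧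
    (∀ x y : Fin nX, x ≠ y → (H.filter (fun e => x ∈ e ∧ y ∈ e)).card ≤ p) ∧
    ∃ φ : V ≃ {e // e ∈ H},
      ∀ u v : V, G.Adj u v ↔
        (u ≠ v ∧ ((φ u : Finset (Fin nX)) ∩ (φ v : Finset (Fin nX))).Nonempty)

lemma isLG_of_iso {k p : ℕ} {V W : Type} {G : SimpleGraph V} {G' : SimpleGraph W}
    (f : G ≃g G') (h : IsLG k p G) : IsLG k p G' := by
  obtain ⟨nX, H, hunif, hmult, φ, hadj⟩ := h
  refine ⟨nX, H, hunif, hmult, f.symm.toEquiv.trans φ, ?_⟩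
  intro u v
  have h1 : G'.Adj u v ↔ G.Adj (f.symm u) (f.symm v) := (f.symm.map_adj_iff).symm
  rw [h1, hadj]
  simp only [Equiv.trans_apply]
  constructor
  · rintro ⟨hne, hn⟩
    exact ⟨fun hc => hne (by rw [hc]), hn⟩
  · rintro ⟨hne, hn⟩
    exact ⟨fun hc => hne (f.symm.toEquiv.injective hc), hn⟩

lemma isLG_induce {k p : ℕ} {V : Type} {G : SimpleGraph V} (h : IsLG k p G) (s : Set V) :
    IsLG k p (G.induce s) := by
  classical
  obtain ⟨nX, H, hunif, hmult, φ, hadj⟩ := h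
  set H' : Finset (Finset (Fin nX)) :=
    (H.attach.filter (fun e => (φ.symm e : V) ∈ s)).image Subtype.val with hH'
  have hsub : H' ⊆ H := by
    intro e he
    rw [hH', Finset.mem_image] at he
    obtain ⟨a, _, rfl⟩ := he
    exact a.2
  have hmemH' : ∀ (x : ↥s), ((φ (x : V)) : Finset (Fin nX)) ∈ H' := by
    intro x
    rw [hH', Finset.mem_image]
    refine ⟨φ (x : V), Finset.mem_filter.2 ⟨Finset.mem_attach _ _, ?_⟩, rfl⟩
    rw [Equiv.symm_apply_apply]
    exact x.2
  let F : ↥s → {e // e ∈ H'} := fun x => ⟨((φ (x : V)) : Finset (Fin nX)), hmemH' x⟩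
  have hFinj : Function.Injective F := by
    intro x y hxy
    have h1 : (F x).1 = (F y).1 := congrArg Subtype.val hxy
    have h2 : φ (x : V) = φ (y : V) :=
      Subtype.ext (show ((φ (x : V)) : Finset (Fin nX)) = ((φ (y : V)) : Finset (Fin nX)) from h1)
    exact Subtype.ext (φ.injective h2)
  have hFsurj : Function.Surjective F := by
    intro y
    obtain ⟨a, ha, hval⟩ := Finset.mem_image.1
      (show (y : Finset (Fin nX)) ∈
        (H.attach.filter (fun e => (φ.symm e : V) ∈ s)).image Subtype.val from y.2)
    rw [Finset.mem_filter] at ha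
    refine ⟨⟨φ.symm a, ha.2⟩, ?_⟩
    apply Subtype.ext
    show ((φ (φ.symm a)) : Finset (Fin nX)) = y.1
    exact (congrArg Subtype.val (Equiv.apply_symm_apply φ a)).trans hval
  refine ⟨nX, H', fun e he => hunif e (hsub he),
    fun x y hxy => le_trans (Finset.card_le_card (Finset.filter_subset_filter _ hsub)) (hmult x y hxy),
    Equiv.ofBijective F ⟨hFinj, hFsurj⟩, ?_⟩
  intro u v
  have hval : ∀ x : ↥s, ((Equiv.ofBijective F ⟨hFinj, hFsurj⟩ x : Finset (Fin nX))) =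
      ((φ (x : V)) : Finset (Fin nX)) := fun x => rfl
  rw [hval, hval]
  have : (G.induce s).Adj u v ↔ G.Adj (u : V) (v : V) := Iff.rfl
  rw [this, hadj]
  constructor
  · rintro ⟨hne, hn⟩
    exact ⟨fun hc => hne (congrArg Subtype.val hc), hn⟩
  · rintro ⟨hne, hn⟩
    exact ⟨fun hc => hne (Subtype.ext hc), hn⟩

/-- The star `K_{1,k+1}`. -/
def Star (k : ℕ) : SimpleGraph (Fin (k + 2)) :=
  SimpleGraph.fromRel (fun a _ => a = 0)

lemma not_isLG_star {k p : ℕ} (hk : 2 ≤ k) : ¬ IsLG k p (Star k) := by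
  classical
  rintro ⟨nX, H, hunif, hmult, φ, hadj⟩
  -- leaves
  have hadj0 : ∀ i : Fin (k + 1), (Star k).Adj 0 i.succ := by
    intro i
    rw [Star, SimpleGraph.fromRel_adj]
    exact ⟨(Fin.succ_ne_zero i).symm, Or.inl rfl⟩
  have hleaf : ∀ i : Fin (k + 1),
      (((φ 0) : Finset (Fin nX)) ∩ ((φ i.succ) : Finset (Fin nX))).Nonempty := by
    intro i
    have := (hadj 0 i.succ).1 (hadj0 i)
    exact this.2
  have hnonadj : ∀ i j : Fin (k + 1), i ≠ j →
      (((φ i.succ) : Finset (Fin nX)) ∩ ((φ j.succ) : Finset (Fin nX))) = ∅ := by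
    intro i j hij
    have hne : i.succ ≠ j.succ := by
      intro hc; exact hij (Fin.succ_injective _ hc)
    have hna : ¬ (Star k).Adj i.succ j.succ := by
      rw [Star, SimpleGraph.fromRel_adj]
      rintro ⟨-, h | h⟩
      · exact Fin.succ_ne_zero i h
      · exact Fin.succ_ne_zero j h
    rw [hadj] at hna
    push_neg at hna
    by_contra hc
    rw [← Finset.not_nonempty_iff_eq_empty] at hc
    exact hc (Finset.not_nonempty_iff_eq_empty.2 (hna hne))
  let t : Fin (k + 1) → Fin nX := fun i => (_root_.id (hleaf i)).choose
  have ht : ∀ i, t i ∈ ((φ 0) : Finset (Fin nX)) ∩ ((φ i.succ) : Finset (Fin nX)) :=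
    fun i => (_root_.id (hleaf i)).choose_spec
  have htinj : Function.Injective t := by
    intro i j hij
    by_contra hne
    have h1 := Finset.mem_inter.1 (ht i)
    have h2 := Finset.mem_inter.1 (ht j)
    have : t i ∈ ((φ i.succ) : Finset (Fin nX)) ∩ ((φ j.succ) : Finset (Fin nX)) := by
      rw [Finset.mem_inter]
      exact ⟨h1.2, by rw [hij]; exact h2.2⟩
    rw [hnonadj i j hne] at this
    exact absurd this (Finset.notMem_empty _)
  have hcard : (Finset.univ : Finset (Fin (k + 1))).card ≤ ((φ 0) : Finset (Fin nX)).card := by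
    apply Finset.card_le_card_of_injOn t
    · intro i _
      exact (Finset.mem_inter.1 (ht i)).1
    · exact fun a _ b _ h => htinj h
  rw [Finset.card_univ, Fintype.card_fin, hunif _ (φ 0).2] at hcard
  omega



-- ===== part 2 =====




variable {k p n : ℕ} {G : SimpleGraph (Fin n)}

/-- A maximal clique of size at least `p*k^2+2`. -/
def MaxBig (k p : ℕ) (G : SimpleGraph (Fin n)) (Q : Finset (Fin n)) : Prop :=
  G.IsClique ↑Q ∧ p * k ^ 2 + 2 ≤ Q.card ∧
    ∀ R : Finset (Fin n), G.IsClique ↑R → Q ⊆ R → R = Q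

lemma exists_maxBig (K : Finset (Fin n)) (hK : G.IsClique ↑K)
    (hcard : p * k ^ 2 + 2 ≤ K.card) :
    ∃ M : Finset (Fin n), K ⊆ M ∧ MaxBig k p G M := by
  classical
  set S := (Finset.univ : Finset (Fin n)).powerset.filter
    (fun R : Finset (Fin n) => G.IsClique (↑R : Set (Fin n)) ∧ K ⊆ R) with hS
  have hKS : K ∈ S := by
    rw [hS, Finset.mem_filter]
    exact ⟨Finset.mem_powerset.2 (Finset.subset_univ K), hK, subset_rfl⟩
  obtain ⟨M, hMS, hmax⟩ := S.exists_max_image Finset.card ⟨K, hKS⟩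
  rw [hS, Finset.mem_filter] at hMS
  obtain ⟨-, hMcl, hKM⟩ := hMS
  refine ⟨M, hKM, hMcl, le_trans hcard (Finset.card_le_card hKM), ?_⟩
  intro R hRcl hMR
  have hRS : R ∈ S := by
    rw [hS, Finset.mem_filter]
    exact ⟨Finset.mem_powerset.2 (Finset.subset_univ R), hRcl, hKM.trans hMR⟩
  exact (Finset.eq_of_subset_of_card_le hMR (hmax R hRS)).symm

/-- Pairwise-intersecting families of `k`-sets with pair multiplicity at most `p`
    which are large have a common element. -/
lemma common_vertex {nX : ℕ} {H : Finset (Finset (Fin nX))}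
    (hk : 2 ≤ k)
    (hunif : ∀ e ∈ H, e.card = k)
    (hmult : ∀ x y : Fin nX, x ≠ y → (H.filter (fun e => x ∈ e ∧ y ∈ e)).card ≤ p)
    (Q : Finset (Finset (Fin nX))) (hQH : Q ⊆ H)
    (hint : ∀ e ∈ Q, ∀ f ∈ Q, (e ∩ f).Nonempty)
    (hcard : p * k ^ 2 + 2 ≤ Q.card) :
    ∃ x : Fin nX, ∀ e ∈ Q, x ∈ e := by
  classical
  have hQne : Q.Nonempty := Finset.card_pos.1 (by omega)
  obtain ⟨e₀, he₀⟩ := hQne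
  have he₀card : e₀.card = k := hunif e₀ (hQH he₀)
  have he₀ne : e₀.Nonempty := Finset.card_pos.1 (by omega)
  obtain ⟨x₀, hx₀⟩ := he₀ne
  set R := Q.erase e₀ with hR
  have hRcard : p * k ^ 2 + 1 ≤ R.card := by
    rw [hR, Finset.card_erase_of_mem he₀]
    omega
  set c : Finset (Fin nX) → Fin nX :=
    fun f => if h : (f ∩ e₀).Nonempty then (f ∩ e₀).min' h else x₀ with hc
  have hcmem : ∀ f ∈ R, c f ∈ f ∩ e₀ := by
    intro f hf
    have hfQ : f ∈ Q := Finset.erase_subset _ _ hf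
    have hne : (f ∩ e₀).Nonempty := hint f hfQ e₀ he₀
    rw [hc]
    simp only [dif_pos hne]
    exact Finset.min'_mem _ hne
  have hmaps : ∀ f ∈ R, c f ∈ e₀ := fun f hf => (Finset.mem_inter.1 (hcmem f hf)).2
  have hpig : e₀.card * (p * k) < R.card := by
    rw [he₀card]; nlinarith
  obtain ⟨x, hxe₀, hxfib⟩ :=
    Finset.exists_lt_card_fiber_of_mul_lt_card_of_maps_to hmaps hpig
  set A := R.filter (fun f => c f = x) with hA
  have hAx : ∀ f ∈ A, x ∈ f := by
    intro f hf
    rw [hA, Finset.mem_filter] at hf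
    have := hcmem f hf.1
    rw [hf.2] at this
    exact (Finset.mem_inter.1 this).1
  have hAH : ∀ f ∈ A, f ∈ H := by
    intro f hf
    rw [hA, Finset.mem_filter] at hf
    exact hQH (Finset.erase_subset _ _ hf.1)
  have hAQ : ∀ f ∈ A, f ∈ Q := by
    intro f hf
    rw [hA, Finset.mem_filter] at hf
    exact Finset.erase_subset _ _ hf.1
  refine ⟨x, ?_⟩
  intro g hg
  by_contra hxg
  -- map each f ∈ A to a point of f ∩ g
  set d : Finset (Fin nX) → Fin nX :=
    fun f => if h : (f ∩ g).Nonempty then (f ∩ g).min' h else x₀ with hd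
  have hdmem : ∀ f ∈ A, d f ∈ f ∩ g := by
    intro f hf
    have hne : (f ∩ g).Nonempty := hint f (hAQ f hf) g hg
    rw [hd]
    simp only [dif_pos hne]
    exact Finset.min'_mem _ hne
  have hdmaps : ∀ f ∈ A, d f ∈ g := fun f hf => (Finset.mem_inter.1 (hdmem f hf)).2
  have hfib : ∀ y ∈ g, (A.filter (fun f => d f = y)).card ≤ p := by
    intro y hy
    have hxy : x ≠ y := fun h => hxg (h ▸ hy)
    have hsub : A.filter (fun f => d f = y) ⊆ H.filter (fun e => x ∈ e ∧ y ∈ e) := by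
      intro f hf
      rw [Finset.mem_filter] at hf ⊢
      refine ⟨hAH f hf.1, hAx f hf.1, ?_⟩
      have := hdmem f hf.1
      rw [hf.2] at this
      exact (Finset.mem_inter.1 this).1
    exact le_trans (Finset.card_le_card hsub) (hmult x y hxy)
  have hAcard : A.card ≤ p * g.card :=
    Finset.card_le_mul_card_image_of_maps_to hdmaps p hfib
  rw [hunif g (hQH hg)] at hAcard
  have : p * k < A.card := hxfib
  omega

/-- Extract a convenient "total" model from `IsLG` of an induced subgraph. -/
lemma exists_model {W : Finset (Fin n)}
    (h : IsLG k p (G.induce (↑W : Set (Fin n)))) :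
    ∃ (nX : ℕ) (Hh : Finset (Finset (Fin nX))) (md : Fin n → Finset (Fin nX)),
      (∀ e ∈ Hh, e.card = k) ∧
      (∀ x y : Fin nX, x ≠ y → (Hh.filter (fun e => x ∈ e ∧ y ∈ e)).card ≤ p) ∧
      (∀ w ∈ W, md w ∈ Hh) ∧
      (∀ w ∈ W, ∀ w' ∈ W, w ≠ w' → md w ≠ md w') ∧
      (∀ w ∈ W, ∀ w' ∈ W, (G.Adj w w' ↔ (w ≠ w' ∧ (md w ∩ md w').Nonempty))) := by
  classical
  obtain ⟨nX, Hh, hunif, hmult, φ, hadj⟩ := h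
  set md : Fin n → Finset (Fin nX) := fun w =>
    if hw : w ∈ W then (φ ⟨w, by simpa using hw⟩ : Finset (Fin nX)) else ∅ with hmd
  have hmdval : ∀ w (hw : w ∈ W), md w = (φ ⟨w, by simpa using hw⟩ : Finset (Fin nX)) := by
    intro w hw
    rw [hmd]
    simp only [dif_pos hw]
  refine ⟨nX, Hh, md, hunif, hmult, ?_, ?_, ?_⟩
  · intro w hw
    rw [hmdval w hw]
    exact (φ _).2
  · intro w hw w' hw' hne hc
    rw [hmdval w hw, hmdval w' hw'] at hc
    have : φ ⟨w, by simpa using hw⟩ = φ ⟨w', by simpa using hw'⟩ := Subtype.ext hc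
    have := φ.injective this
    exact hne (congrArg Subtype.val this)
  · intro w hw w' hw'
    have h1 : G.Adj w w' ↔ (G.induce (↑W : Set (Fin n))).Adj
        ⟨w, by simpa using hw⟩ ⟨w', by simpa using hw'⟩ := Iff.rfl
    rw [h1, hadj, hmdval w hw, hmdval w' hw']
    constructor
    · rintro ⟨h2, h3⟩
      exact ⟨fun hc => h2 (Subtype.ext hc), h3⟩
    · rintro ⟨h2, h3⟩
      exact ⟨fun hc => h2 (congrArg Subtype.val hc), h3⟩


-- ===== part 3 =====

/-- Numerical parameters -/
def Tc (k p : ℕ) : ℕ := p * k ^ 2 + 2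
def qc (k p : ℕ) : ℕ := p * k ^ 3 + p * k + 1 - 3 * k
def Cc (k p : ℕ) : ℕ := qc k p + (k + 2) * Tc k p + 2


lemma aux3k {k p : ℕ} (hk : 2 ≤ k) (hp : 1 ≤ p) : 3 * k ≤ p * k ^ 3 + p * k + 1 := by
  have h2 : 2 * k ≤ k * k := Nat.mul_le_mul_right k hk
  have h3 : k * k ≤ k * k * k := Nat.le_mul_of_pos_right _ (by omega)
  have h1 : k ^ 3 = k * k * k := by ring
  have h4 : k ^ 3 ≤ p * k ^ 3 := Nat.le_mul_of_pos_left _ (by omega)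
  have h5 : k ≤ p * k := Nat.le_mul_of_pos_left _ (by omega)
  linarith

lemma auxpk2 {k p : ℕ} (hk : 2 ≤ k) (hp : 1 ≤ p) : 1 ≤ p * k ^ 2 := by
  have := Nat.mul_pos (show 0 < p by omega) (show 0 < k ^ 2 by positivity)
  omega

lemma qc_cast {k p : ℕ} (hk : 2 ≤ k) (hp : 1 ≤ p) :
    (qc k p : ℤ) = (p : ℤ) * k ^ 3 + ((p : ℤ) - 3) * k + 1 := by
  have h3k := aux3k hk hp
  unfold qc
  zify [h3k]
  ring

lemma qc_arith {k p : ℕ} (hk : 2 ≤ k) (hp : 1 ≤ p) :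
    (k - 1) * (p * k ^ 2 - 1) + p * (k - 1) * (k - 1) + 1 ≤ qc k p := by
  have h3k := aux3k hk hp
  have h1 := auxpk2 hk hp
  have h2 : 1 ≤ k := by omega
  unfold qc
  zify [h3k, h1, h2]
  nlinarith

section ModelHelpers

variable {k p n nX : ℕ} {G : SimpleGraph (Fin n)}
  {Hh : Finset (Finset (Fin nX))} {md : Fin n → Finset (Fin nX)} {W : Finset (Fin n)}

/-- vertices whose hyperedges share a common point form a clique -/
lemma clique_of_common
    (hmdadj : ∀ w ∈ W, ∀ w' ∈ W, (G.Adj w w' ↔ (w ≠ w' ∧ (md w ∩ md w').Nonempty)))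
    (B : Finset (Fin n)) (hBW : B ⊆ W) (x : Fin nX) (hx : ∀ b ∈ B, x ∈ md b) :
    G.IsClique (↑B : Set (Fin n)) := by
  intro a ha b hb hab
  rw [Finset.mem_coe] at ha hb
  rw [hmdadj a (hBW ha) b (hBW hb)]
  exact ⟨hab, ⟨x, Finset.mem_inter.2 ⟨hx a ha, hx b hb⟩⟩⟩

/-- at most `p` vertices can have hyperedges containing two fixed points -/
lemma card_le_p_of_pair
    (hmult : ∀ x y : Fin nX, x ≠ y → (Hh.filter (fun e => x ∈ e ∧ y ∈ e)).card ≤ p)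
    (hmdH : ∀ w ∈ W, md w ∈ Hh)
    (hmdinj : ∀ w ∈ W, ∀ w' ∈ W, w ≠ w' → md w ≠ md w')
    (A : Finset (Fin n)) (hAW : A ⊆ W) {x y : Fin nX} (hxy : x ≠ y)
    (h : ∀ a ∈ A, x ∈ md a ∧ y ∈ md a) : A.card ≤ p := by
  classical
  have hinj : Set.InjOn md ↑A := by
    intro a ha b hb hab
    rw [Finset.mem_coe] at ha hb
    by_contra hne
    exact hmdinj a (hAW ha) b (hAW hb) hne hab
  have hmap : ∀ a ∈ A, md a ∈ Hh.filter (fun e => x ∈ e ∧ y ∈ e) := by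
    intro a ha
    rw [Finset.mem_filter]
    exact ⟨hmdH a (hAW ha), h a ha⟩
  exact le_trans (Finset.card_le_card_of_injOn md hmap hinj) (hmult x y hxy)

/-- big cliques have a common point in the model -/
lemma clique_common (hk : 2 ≤ k)
    (hunif : ∀ e ∈ Hh, e.card = k)
    (hmult : ∀ x y : Fin nX, x ≠ y → (Hh.filter (fun e => x ∈ e ∧ y ∈ e)).card ≤ p)
    (hmdH : ∀ w ∈ W, md w ∈ Hh)
    (hmdinj : ∀ w ∈ W, ∀ w' ∈ W, w ≠ w' → md w ≠ md w')
    (hmdadj : ∀ w ∈ W, ∀ w' ∈ W, (G.Adj w w' ↔ (w ≠ w' ∧ (md w ∩ md w').Nonempty)))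
    (B : Finset (Fin n)) (hBW : B ⊆ W) (hBcl : G.IsClique (↑B : Set (Fin n)))
    (hBcard : p * k ^ 2 + 2 ≤ B.card) :
    ∃ x : Fin nX, ∀ b ∈ B, x ∈ md b := by
  classical
  have hinj : Set.InjOn md ↑B := by
    intro a ha b hb hab
    rw [Finset.mem_coe] at ha hb
    by_contra hne
    exact hmdinj a (hBW ha) b (hBW hb) hne hab
  have hcard : p * k ^ 2 + 2 ≤ (B.image md).card := by
    rwa [Finset.card_image_of_injOn hinj]
  have hQH : B.image md ⊆ Hh := by
    intro e he
    obtain ⟨b, hb, rfl⟩ := Finset.mem_image.1 he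
    exact hmdH b (hBW hb)
  have hint : ∀ e ∈ B.image md, ∀ f ∈ B.image md, (e ∩ f).Nonempty := by
    intro e he f hf
    obtain ⟨b, hb, rfl⟩ := Finset.mem_image.1 he
    obtain ⟨b', hb', rfl⟩ := Finset.mem_image.1 hf
    by_cases hbb : b = b'
    · subst hbb
      rw [Finset.inter_self]
      rw [← Finset.card_pos, hunif _ (hmdH b (hBW hb))]
      omega
    · have := hBcl (Finset.mem_coe.2 hb) (Finset.mem_coe.2 hb') hbb
      rw [hmdadj b (hBW hb) b' (hBW hb')] at this
      exact this.2
  obtain ⟨x, hx⟩ := common_vertex hk hunif hmult (B.image md) hQH hint hcard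
  exact ⟨x, fun b hb => hx (md b) (Finset.mem_image_of_mem md hb)⟩

end ModelHelpers

section Beast

variable {k p n : ℕ} {G : SimpleGraph (Fin n)} [DecidableRel G.Adj]

/-- E2 : every edge lies in a big maximal clique -/
lemma edge_in_maxBig (hk : 2 ≤ k) (hp : 1 ≤ p)
    (hyp : ∀ u v : Fin n, G.Adj u v →
      qc k p ≤ (Finset.univ.filter (fun w => G.Adj u w ∧ G.Adj v w)).card)
    (hloc : ∀ W : Finset (Fin n), W.card ≤ Cc k p →
      IsLG k p (G.induce (↑W : Set (Fin n))))
    {u v : Fin n} (huv : G.Adj u v) :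
    ∃ Q : Finset (Fin n), MaxBig k p G Q ∧ u ∈ Q ∧ v ∈ Q := by
  classical
  obtain ⟨S', hS'sub, hS'card⟩ := Finset.exists_subset_card_eq (hyp u v huv)
  set W := insert u (insert v S') with hW
  have hSmem : ∀ w ∈ S', G.Adj u w ∧ G.Adj v w := by
    intro w hw
    have := hS'sub hw
    rw [Finset.mem_filter] at this
    exact this.2
  have huW : u ∈ W := Finset.mem_insert_self _ _
  have hvW : v ∈ W := Finset.mem_insert_of_mem (Finset.mem_insert_self _ _)
  have hS'W : ∀ w ∈ S', w ∈ W := by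
    intro w hw
    exact Finset.mem_insert_of_mem (Finset.mem_insert_of_mem hw)
  have hWcard : W.card ≤ Cc k p := by
    have h1 := Finset.card_insert_le u (insert v S')
    have h2 := Finset.card_insert_le v S'
    have : W.card ≤ S'.card + 2 := by
      rw [hW]; omega
    rw [hS'card] at this
    unfold Cc Tc at *
    omega
  obtain ⟨nX, Hh, md, hunif, hmult, hmdH, hmdinj, hmdadj⟩ := exists_model (hloc W hWcard)
  have hneuv : u ≠ v := G.ne_of_adj huv
  have hmduv : (md u ∩ md v).Nonempty := ((hmdadj u huW v hvW).1 huv).2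
  have hmdune : md u ≠ md v := hmdinj u huW v hvW hneuv
  have hcardu : (md u).card = k := hunif _ (hmdH u huW)
  have hcardv : (md v).card = k := hunif _ (hmdH v hvW)
  obtain ⟨x₀, hx₀⟩ := id hmduv
  -- split S' into core and cross
  set Acore := S'.filter (fun w => (md w ∩ (md u ∩ md v)).Nonempty) with hAcore
  set Across := S'.filter (fun w => ¬ (md w ∩ (md u ∩ md v)).Nonempty) with hAcross
  have hsplit : Acore.card + Across.card = S'.card := by
    rw [hAcore, hAcross]
    exact Finset.card_filter_add_card_filter_not _
  -- adjacency facts for w ∈ S'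
  have hwu : ∀ w ∈ S', (md w ∩ md u).Nonempty := by
    intro w hw
    have := (hmdadj u huW w (hS'W w hw)).1 (hSmem w hw).1
    obtain ⟨y, hy⟩ := this.2
    exact ⟨y, by rw [Finset.mem_inter] at hy ⊢; exact ⟨hy.2, hy.1⟩⟩
  have hwv : ∀ w ∈ S', (md w ∩ md v).Nonempty := by
    intro w hw
    have := (hmdadj v hvW w (hS'W w hw)).1 (hSmem w hw).2
    obtain ⟨y, hy⟩ := this.2
    exact ⟨y, by rw [Finset.mem_inter] at hy ⊢; exact ⟨hy.2, hy.1⟩⟩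
  -- bound on Across
  set aa : Fin n → Fin nX := fun w =>
    if h : (md w ∩ md u).Nonempty then (md w ∩ md u).min' h else x₀ with haa
  set bb : Fin n → Fin nX := fun w =>
    if h : (md w ∩ md v).Nonempty then (md w ∩ md v).min' h else x₀ with hbb
  have haam : ∀ w ∈ S', aa w ∈ md w ∩ md u := by
    intro w hw
    rw [haa]
    simp only [dif_pos (hwu w hw)]
    exact Finset.min'_mem _ _
  have hbbm : ∀ w ∈ S', bb w ∈ md w ∩ md v := by
    intro w hw
    rw [hbb]
    simp only [dif_pos (hwv w hw)]
    exact Finset.min'_mem _ _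
  have hcross : ∀ w ∈ Across, aa w ∈ md u \ md v ∧ bb w ∈ md v \ md u ∧
      aa w ∈ md w ∧ bb w ∈ md w := by
    intro w hw
    rw [hAcross, Finset.mem_filter] at hw
    obtain ⟨hwS, hwe⟩ := hw
    have h1 := Finset.mem_inter.1 (haam w hwS)
    have h2 := Finset.mem_inter.1 (hbbm w hwS)
    refine ⟨Finset.mem_sdiff.2 ⟨h1.2, ?_⟩, Finset.mem_sdiff.2 ⟨h2.2, ?_⟩, h1.1, h2.1⟩
    · intro hc
      exact hwe ⟨aa w, Finset.mem_inter.2 ⟨h1.1, Finset.mem_inter.2 ⟨h1.2, hc⟩⟩⟩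
    · intro hc
      exact hwe ⟨bb w, Finset.mem_inter.2 ⟨h2.1, Finset.mem_inter.2 ⟨hc, h2.2⟩⟩⟩
  have hAcrossW : Across ⊆ W := fun w hw => hS'W w (Finset.filter_subset _ _ hw)
  have hacard : Across.card ≤ p * ((k - 1) * (k - 1)) := by
    have hmaps : ∀ w ∈ Across, (aa w, bb w) ∈ (md u \ md v) ×ˢ (md v \ md u) := by
      intro w hw
      rw [Finset.mem_product]
      exact ⟨(hcross w hw).1, (hcross w hw).2.1⟩
    have hfib : ∀ z ∈ (md u \ md v) ×ˢ (md v \ md u),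
        (Across.filter (fun w => (aa w, bb w) = z)).card ≤ p := by
      rintro ⟨x, y⟩ hz
      rw [Finset.mem_product] at hz
      have hxy : x ≠ y := by
        intro hc
        have := Finset.mem_sdiff.1 hz.1
        have h2 := Finset.mem_sdiff.1 hz.2
        exact this.2 (hc ▸ h2.1)
      apply card_le_p_of_pair hmult hmdH hmdinj _ (fun w hw => hAcrossW (Finset.filter_subset _ _ hw)) hxy
      intro w hw
      rw [Finset.mem_filter] at hw
      obtain ⟨hwA, hwz⟩ := hw
      have h3 := hcross w hwA
      have hax : aa w = x := by
        have := congrArg Prod.fst hwz; simpa using this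
      have hby : bb w = y := by
        have := congrArg Prod.snd hwz; simpa using this
      exact ⟨hax ▸ h3.2.2.1, hby ▸ h3.2.2.2⟩
    have := Finset.card_le_mul_card_image_of_maps_to hmaps p hfib
    have hcards : ((md u \ md v) ×ˢ (md v \ md u)).card ≤ (k - 1) * (k - 1) := by
      rw [Finset.card_product]
      have h1 : (md u \ md v).card ≤ k - 1 := by
        have h2 : (md u ∩ md v).card ≥ 1 := Finset.card_pos.2 hmduv
        have h3 := Finset.card_sdiff_add_card_inter (md u) (md v)
        omega
      have h4 : (md v \ md u).card ≤ k - 1 := by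
        have h2 : (md v ∩ md u).card ≥ 1 := by
          rw [Finset.inter_comm]
          exact Finset.card_pos.2 hmduv
        have h3 := Finset.card_sdiff_add_card_inter (md v) (md u)
        omega
      exact Nat.mul_le_mul h1 h4
    calc Across.card ≤ p * ((md u \ md v) ×ˢ (md v \ md u)).card := this
      _ ≤ p * ((k - 1) * (k - 1)) := Nat.mul_le_mul_left p hcards
  -- core is large
  have hcorecard : (k - 1) * (p * k ^ 2 - 1) < Acore.card := by
    have harith := qc_arith hk hp
    have : p * (k - 1) * (k - 1) = p * ((k - 1) * (k - 1)) := by ring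
    omega
  -- pigeonhole inside md u ∩ md v
  set cc : Fin n → Fin nX := fun w =>
    if h : (md w ∩ (md u ∩ md v)).Nonempty then (md w ∩ (md u ∩ md v)).min' h else x₀ with hcc
  have hccm : ∀ w ∈ Acore, cc w ∈ md w ∩ (md u ∩ md v) := by
    intro w hw
    rw [hAcore, Finset.mem_filter] at hw
    rw [hcc]
    simp only [dif_pos hw.2]
    exact Finset.min'_mem _ _
  have htcard : (md u ∩ md v).card ≤ k - 1 := by
    have hssub : md u ∩ md v ⊆ md u := Finset.inter_subset_left
    have : md u ∩ md v ≠ md u := by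
      intro hc
      have : md u ⊆ md v := by
        rw [← hc]; exact Finset.inter_subset_right
      exact hmdune (Finset.eq_of_subset_of_card_le this (by omega))
    have := Finset.card_lt_card (Finset.ssubset_iff_subset_ne.2 ⟨hssub, this⟩)
    omega
  have hpig : (md u ∩ md v).card * (p * k ^ 2 - 1) < Acore.card := by
    calc (md u ∩ md v).card * (p * k ^ 2 - 1) ≤ (k - 1) * (p * k ^ 2 - 1) :=
          Nat.mul_le_mul_right _ htcard
      _ < Acore.card := hcorecard
  obtain ⟨x, hxmem, hxfib⟩ := Finset.exists_lt_card_fiber_of_mul_lt_card_of_maps_to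
    (fun w hw => (Finset.mem_inter.1 (hccm w hw)).2) hpig
  set Bf := Acore.filter (fun w => cc w = x) with hBf
  set B := insert u (insert v Bf) with hB
  have hBfW : Bf ⊆ W := by
    intro w hw
    exact hS'W w (Finset.filter_subset _ _ (Finset.filter_subset _ _ hw))
  have hBW : B ⊆ W := by
    rw [hB]
    intro w hw
    rcases Finset.mem_insert.1 hw with rfl | hw
    · exact huW
    rcases Finset.mem_insert.1 hw with rfl | hw
    · exact hvW
    · exact hBfW hw
  have hxinter := Finset.mem_inter.1 hxmem
  have hBx : ∀ b ∈ B, x ∈ md b := by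
    intro b hb
    rw [hB] at hb
    rcases Finset.mem_insert.1 hb with rfl | hb
    · exact hxinter.1
    rcases Finset.mem_insert.1 hb with rfl | hb
    · exact hxinter.2
    · rw [hBf, Finset.mem_filter] at hb
      have := hccm b hb.1
      rw [hb.2] at this
      exact (Finset.mem_inter.1 this).1
  have hBcl : G.IsClique (↑B : Set (Fin n)) := clique_of_common hmdadj B hBW x hBx
  have huS : u ∉ S' := by
    intro hc
    exact (G.irrefl) (hSmem u hc).1
  have hvS : v ∉ S' := by
    intro hc
    exact (G.irrefl) (hSmem v hc).2
  have hBcard : p * k ^ 2 + 2 ≤ B.card := by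
    have hvB : v ∉ Bf := fun hc => hvS (Finset.filter_subset _ _ (Finset.filter_subset _ _ hc))
    have huB : u ∉ insert v Bf := by
      rw [Finset.mem_insert]
      rintro (rfl | hc)
      · exact hneuv rfl
      · exact huS (Finset.filter_subset _ _ (Finset.filter_subset _ _ hc))
    rw [hB, Finset.card_insert_of_notMem huB, Finset.card_insert_of_notMem hvB]
    have h5 : p * k ^ 2 - 1 < Bf.card := hxfib
    have h6 : 1 ≤ p * k ^ 2 := auxpk2 hk hp
    omega
  obtain ⟨M, hBM, hM⟩ := exists_maxBig B hBcl hBcard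
  exact ⟨M, hM, hBM (Finset.mem_insert_self _ _),
    hBM (Finset.mem_insert_of_mem (Finset.mem_insert_self _ _))⟩

end Beast


-- ===== part 4 =====
section Beast2

variable {k p n : ℕ} {G : SimpleGraph (Fin n)} [DecidableRel G.Adj]

/-- E3: two distinct big maximal cliques intersect in at most `p` vertices. -/
lemma maxBig_inter_le (hk : 2 ≤ k) (hp : 1 ≤ p)
    (hloc : ∀ W : Finset (Fin n), W.card ≤ Cc k p →
      IsLG k p (G.induce (↑W : Set (Fin n))))
    {Q Q' : Finset (Fin n)} (hQ : MaxBig k p G Q) (hQ' : MaxBig k p G Q')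
    (hne : Q ≠ Q') : (Q ∩ Q').card ≤ p := by
  classical
  by_contra hbig
  push_neg at hbig
  obtain ⟨S, hSsub, hScard⟩ := Finset.exists_subset_card_eq (show p + 1 ≤ (Q ∩ Q').card by omega)
  have hSQ : S ⊆ Q := hSsub.trans Finset.inter_subset_left
  have hSQ' : S ⊆ Q' := hSsub.trans Finset.inter_subset_right
  -- main claim : all cross pairs are adjacent
  have hclaim : ∀ u ∈ Q, u ∉ Q' → ∀ v ∈ Q', v ∉ Q → G.Adj u v := by
    intro u huQ huQ' v hvQ' hvQ
    have huv : u ≠ v := fun hc => huQ' (hc ▸ hvQ')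
    have hsu : insert u S ⊆ Q := by
      intro w hw
      rcases Finset.mem_insert.1 hw with rfl | hw
      · exact huQ
      · exact hSQ hw
    have hsv : insert v S ⊆ Q' := by
      intro w hw
      rcases Finset.mem_insert.1 hw with rfl | hw
      · exact hvQ'
      · exact hSQ' hw
    have hple : p * 1 ≤ p * k ^ 2 := Nat.mul_le_mul le_rfl (Nat.one_le_pow 2 k (by omega))
    have hcard1 : (insert u S).card ≤ Tc k p := by
      have := Finset.card_insert_le u S
      unfold Tc
      omega
    have hcard2 : (insert v S).card ≤ Tc k p := by
      have := Finset.card_insert_le v S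
      unfold Tc
      omega
    obtain ⟨Q1, hQ1sup, hQ1sub, hQ1card⟩ :=
      Finset.exists_subsuperset_card_eq hsu hcard1 hQ.2.1
    obtain ⟨Q2, hQ2sup, hQ2sub, hQ2card⟩ :=
      Finset.exists_subsuperset_card_eq hsv hcard2 hQ'.2.1
    set W := Q1 ∪ Q2 with hW
    have hWcard : W.card ≤ Cc k p := by
      have := Finset.card_union_le Q1 Q2
      have h4 : 2 * Tc k p ≤ (k + 2) * Tc k p := Nat.mul_le_mul_right _ (by omega)
      rw [hW]
      unfold Cc
      omega
    obtain ⟨nX, Hh, md, hunif, hmult, hmdH, hmdinj, hmdadj⟩ := exists_model (hloc W hWcard)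
    have hQ1W : Q1 ⊆ W := Finset.subset_union_left
    have hQ2W : Q2 ⊆ W := Finset.subset_union_right
    have hQ1cl : G.IsClique (↑Q1 : Set (Fin n)) := hQ.1.subset (by exact_mod_cast hQ1sub)
    have hQ2cl : G.IsClique (↑Q2 : Set (Fin n)) := hQ'.1.subset (by exact_mod_cast hQ2sub)
    obtain ⟨x, hx⟩ := clique_common hk hunif hmult hmdH hmdinj hmdadj Q1 hQ1W hQ1cl (le_of_eq hQ1card.symm)
    obtain ⟨y, hy⟩ := clique_common hk hunif hmult hmdH hmdinj hmdadj Q2 hQ2W hQ2cl (le_of_eq hQ2card.symm)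
    by_cases hxy : x = y
    · subst hxy
      have hxu : x ∈ md u := hx u (hQ1sup (Finset.mem_insert_self _ _))
      have hxv : x ∈ md v := hy v (hQ2sup (Finset.mem_insert_self _ _))
      rw [hmdadj u (hQ1W (hQ1sup (Finset.mem_insert_self _ _)))
        v (hQ2W (hQ2sup (Finset.mem_insert_self _ _)))]
      exact ⟨huv, ⟨x, Finset.mem_inter.2 ⟨hxu, hxv⟩⟩⟩
    · exfalso
      have hSW : S ⊆ W := fun s hs => hQ1W (hQ1sup (Finset.mem_insert_of_mem hs))
      have hScard' : S.card ≤ p := by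
        apply card_le_p_of_pair hmult hmdH hmdinj S hSW hxy
        intro s hs
        exact ⟨hx s (hQ1sup (Finset.mem_insert_of_mem hs)),
               hy s (hQ2sup (Finset.mem_insert_of_mem hs))⟩
      omega
  -- Q ∪ Q' is a clique
  have hunion : G.IsClique (↑(Q ∪ Q') : Set (Fin n)) := by
    intro a ha b hb hab
    rw [Finset.coe_union, Set.mem_union] at ha hb
    rw [Finset.mem_coe] at ha hb
    by_cases haQ : a ∈ Q <;> by_cases hbQ : b ∈ Q
    · exact hQ.1 (Finset.mem_coe.2 haQ) (Finset.mem_coe.2 hbQ) hab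
    · have hbQ' : b ∈ Q' := by tauto
      by_cases haQ' : a ∈ Q'
      · exact hQ'.1 (Finset.mem_coe.2 haQ') (Finset.mem_coe.2 hbQ') hab
      · exact hclaim a haQ haQ' b hbQ' hbQ
    · have haQ' : a ∈ Q' := by tauto
      by_cases hbQ'' : b ∈ Q'
      · exact hQ'.1 (Finset.mem_coe.2 haQ') (Finset.mem_coe.2 hbQ'') hab
      · exact (hclaim b hbQ hbQ'' a haQ' haQ).symm
    · have haQ' : a ∈ Q' := by tauto
      have hbQ' : b ∈ Q' := by tauto
      exact hQ'.1 (Finset.mem_coe.2 haQ') (Finset.mem_coe.2 hbQ') hab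
  have h1 : Q ∪ Q' = Q := hQ.2.2 _ hunion Finset.subset_union_left
  have h2 : Q' ⊆ Q := by
    rw [← h1]; exact Finset.subset_union_right
  exact hne (hQ'.2.2 Q hQ.1 h2)

/-- merge lemma: two big maximal cliques with big subcliques whose union is a clique coincide -/
lemma maxBig_eq (hk : 2 ≤ k) (hp : 1 ≤ p)
    (hE3 : ∀ Q Q' : Finset (Fin n), MaxBig k p G Q → MaxBig k p G Q' → Q ≠ Q' →
      (Q ∩ Q').card ≤ p)
    {Q Q' SQ SQ' : Finset (Fin n)} (hQ : MaxBig k p G Q) (hQ' : MaxBig k p G Q')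
    (hSQ : SQ ⊆ Q) (hSQ' : SQ' ⊆ Q')
    (hcQ : SQ.card = Tc k p) (hcQ' : SQ'.card = Tc k p)
    (hcl : G.IsClique (↑(SQ ∪ SQ') : Set (Fin n))) : Q = Q' := by
  have hTcard : p * k ^ 2 + 2 ≤ (SQ ∪ SQ').card := by
    have := Finset.card_le_card (Finset.subset_union_left : SQ ⊆ SQ ∪ SQ')
    unfold Tc at hcQ
    omega
  obtain ⟨M, hsubM, hM⟩ := exists_maxBig (SQ ∪ SQ') hcl hTcard
  have hppk : p < p * k ^ 2 + 2 := by
    have : p * 1 ≤ p * k ^ 2 := Nat.mul_le_mul le_rfl (Nat.one_le_pow 2 k (by omega))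
    omega
  have hMQ : M = Q := by
    by_contra hne
    have := hE3 M Q hM hQ hne
    have hsub : SQ ⊆ M ∩ Q :=
      Finset.subset_inter ((Finset.subset_union_left).trans hsubM) hSQ
    have := Finset.card_le_card hsub
    unfold Tc at hcQ
    omega
  have hMQ' : M = Q' := by
    by_contra hne
    have := hE3 M Q' hM hQ' hne
    have hsub : SQ' ⊆ M ∩ Q' :=
      Finset.subset_inter ((Finset.subset_union_right).trans hsubM) hSQ'
    have := Finset.card_le_card hsub
    unfold Tc at hcQ'
    omega
  rw [← hMQ, hMQ']

/-- E4: every vertex lies in at most `k` big maximal cliques. -/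
lemma maxBig_count (hk : 2 ≤ k) (hp : 1 ≤ p)
    (hloc : ∀ W : Finset (Fin n), W.card ≤ Cc k p →
      IsLG k p (G.induce (↑W : Set (Fin n))))
    (u : Fin n) (QS : Finset (Finset (Fin n)))
    (hQS : ∀ Q ∈ QS, MaxBig k p G Q ∧ u ∈ Q) : QS.card ≤ k := by
  classical
  have hE3 := fun Q Q' hQ hQ' hne => maxBig_inter_le hk hp hloc (Q := Q) (Q' := Q') hQ hQ' hne
  by_contra hbig
  push_neg at hbig
  obtain ⟨QS', hQS'sub, hQS'card⟩ := Finset.exists_subset_card_eq (show k + 1 ≤ QS.card by omega)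
  set σ : Finset (Fin n) → Finset (Fin n) := fun Q =>
    if h : {u} ⊆ Q ∧ Tc k p ≤ Q.card then
      (Finset.exists_subsuperset_card_eq h.1 (by simp [Tc]) h.2).choose
    else ∅ with hσ
  have hσspec : ∀ Q ∈ QS', u ∈ σ Q ∧ σ Q ⊆ Q ∧ (σ Q).card = Tc k p := by
    intro Q hQ
    obtain ⟨hQmax, huQ⟩ := hQS Q (hQS'sub hQ)
    have hcond : {u} ⊆ Q ∧ Tc k p ≤ Q.card :=
      ⟨Finset.singleton_subset_iff.2 huQ, hQmax.2.1⟩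
    have hch := (Finset.exists_subsuperset_card_eq hcond.1 (by simp [Tc]) hcond.2).choose_spec
    rw [hσ]
    simp only [dif_pos hcond]
    exact ⟨Finset.singleton_subset_iff.1 hch.1, hch.2.1, hch.2.2⟩
  set W := QS'.biUnion σ with hW
  have hWcard : W.card ≤ Cc k p := by
    have h1 := Finset.card_biUnion_le (s := QS') (t := σ)
    have h2 : ∑ Q ∈ QS', (σ Q).card ≤ (k + 1) * Tc k p := by
      calc ∑ Q ∈ QS', (σ Q).card ≤ ∑ _Q ∈ QS', Tc k p := by
            apply Finset.sum_le_sum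
            intro Q hQ
            exact le_of_eq (hσspec Q hQ).2.2
        _ = (k + 1) * Tc k p := by rw [Finset.sum_const, hQS'card, smul_eq_mul]
    have h4 : (k + 1) * Tc k p ≤ (k + 2) * Tc k p := Nat.mul_le_mul_right _ (by omega)
    rw [hW]
    unfold Cc
    omega
  obtain ⟨nX, Hh, md, hunif, hmult, hmdH, hmdinj, hmdadj⟩ := exists_model (hloc W hWcard)
  have hQS'ne : QS'.Nonempty := Finset.card_pos.1 (by omega)
  obtain ⟨Q₀, hQ₀⟩ := hQS'ne
  have hσW : ∀ Q ∈ QS', σ Q ⊆ W := by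
    intro Q hQ s hs
    rw [hW, Finset.mem_biUnion]
    exact ⟨Q, hQ, hs⟩
  have huW : u ∈ W := hσW Q₀ hQ₀ (hσspec Q₀ hQ₀).1
  have hmduk : (md u).card = k := hunif _ (hmdH u huW)
  have hmdune : (md u).Nonempty := Finset.card_pos.1 (by omega)
  obtain ⟨x₀, hx₀⟩ := id hmdune
  have hcom : ∀ Q ∈ QS', ∃ x : Fin nX, ∀ b ∈ σ Q, x ∈ md b := by
    intro Q hQ
    obtain ⟨hQmax, -⟩ := hQS Q (hQS'sub hQ)
    exact clique_common hk hunif hmult hmdH hmdinj hmdadj (σ Q) (hσW Q hQ)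
      (hQmax.1.subset (by exact_mod_cast (hσspec Q hQ).2.1))
      (le_of_eq (hσspec Q hQ).2.2.symm)
  choose xf hxf using hcom
  set xtot : Finset (Fin n) → Fin nX := fun Q =>
    if h : Q ∈ QS' then xf Q h else x₀ with hxtot
  have hmaps : ∀ Q ∈ QS', xtot Q ∈ md u := by
    intro Q hQ
    rw [hxtot]
    simp only [dif_pos hQ]
    exact hxf Q hQ u (hσspec Q hQ).1
  have hlt : (md u).card < QS'.card := by omega
  obtain ⟨Q1, hQ1, Q2, hQ2, hQ12, hxeq⟩ :=
    Finset.exists_ne_map_eq_of_card_lt_of_maps_to hlt hmaps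
  -- common point for σ Q1 ∪ σ Q2
  have hx1 : ∀ b ∈ σ Q1 ∪ σ Q2, xtot Q1 ∈ md b := by
    intro b hb
    rcases Finset.mem_union.1 hb with hb | hb
    · rw [hxtot]; simp only [dif_pos hQ1]; exact hxf Q1 hQ1 b hb
    · rw [hxeq, hxtot]; simp only [dif_pos hQ2]; exact hxf Q2 hQ2 b hb
  have hcl : G.IsClique (↑(σ Q1 ∪ σ Q2) : Set (Fin n)) := by
    apply clique_of_common hmdadj (σ Q1 ∪ σ Q2) ?_ (xtot Q1) hx1
    intro b hb
    rcases Finset.mem_union.1 hb with hb | hb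
    · exact hσW Q1 hQ1 hb
    · exact hσW Q2 hQ2 hb
  have := maxBig_eq hk hp hE3 (hQS Q1 (hQS'sub hQ1)).1 (hQS Q2 (hQS'sub hQ2)).1
    (hσspec Q1 hQ1).2.1 (hσspec Q2 hQ2).2.1
    (hσspec Q1 hQ1).2.2 (hσspec Q2 hQ2).2.2 hcl
  exact hQ12 this

/-- E5: adjacent vertices cannot lie in the same `k` big maximal cliques. -/
lemma no_twins (hk : 2 ≤ k) (hp : 1 ≤ p)
    (hloc : ∀ W : Finset (Fin n), W.card ≤ Cc k p →
      IsLG k p (G.induce (↑W : Set (Fin n))))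
    {u v : Fin n} (hne : u ≠ v)
    (QS : Finset (Finset (Fin n))) (hcard : QS.card = k)
    (hQS : ∀ Q ∈ QS, MaxBig k p G Q ∧ u ∈ Q ∧ v ∈ Q) : False := by
  classical
  have hE3 := fun Q Q' hQ hQ' hne' => maxBig_inter_le hk hp hloc (Q := Q) (Q' := Q') hQ hQ' hne'
  set σ : Finset (Fin n) → Finset (Fin n) := fun Q =>
    if h : {u, v} ⊆ Q ∧ Tc k p ≤ Q.card then
      (Finset.exists_subsuperset_card_eq h.1
        (le_trans (Finset.card_insert_le _ _) (by simp [Tc])) h.2).choose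
    else ∅ with hσ
  have hσspec : ∀ Q ∈ QS, u ∈ σ Q ∧ v ∈ σ Q ∧ σ Q ⊆ Q ∧ (σ Q).card = Tc k p := by
    intro Q hQ
    obtain ⟨hQmax, huQ, hvQ⟩ := hQS Q hQ
    have hcond : {u, v} ⊆ Q ∧ Tc k p ≤ Q.card := by
      refine ⟨?_, hQmax.2.1⟩
      intro w hw
      rcases Finset.mem_insert.1 hw with rfl | hw
      · exact huQ
      · rw [Finset.mem_singleton] at hw; exact hw ▸ hvQ
    have hch := (Finset.exists_subsuperset_card_eq hcond.1
      (le_trans (Finset.card_insert_le _ _) (by simp [Tc])) hcond.2).choose_spec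
    rw [hσ]
    simp only [dif_pos hcond]
    refine ⟨hch.1 (Finset.mem_insert_self _ _), hch.1 ?_, hch.2.1, hch.2.2⟩
    exact Finset.mem_insert_of_mem (Finset.mem_singleton_self _)
  set W := QS.biUnion σ with hW
  have hWcard : W.card ≤ Cc k p := by
    have h1 := Finset.card_biUnion_le (s := QS) (t := σ)
    have h2 : ∑ Q ∈ QS, (σ Q).card ≤ k * Tc k p := by
      calc ∑ Q ∈ QS, (σ Q).card ≤ ∑ _Q ∈ QS, Tc k p := by
            apply Finset.sum_le_sum
            intro Q hQ
            exact le_of_eq (hσspec Q hQ).2.2.2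
        _ = k * Tc k p := by rw [Finset.sum_const, hcard, smul_eq_mul]
    have h4 : k * Tc k p ≤ (k + 2) * Tc k p := Nat.mul_le_mul_right _ (by omega)
    rw [hW]
    unfold Cc
    omega
  obtain ⟨nX, Hh, md, hunif, hmult, hmdH, hmdinj, hmdadj⟩ := exists_model (hloc W hWcard)
  have hQSne : QS.Nonempty := Finset.card_pos.1 (by omega)
  obtain ⟨Q₀, hQ₀⟩ := hQSne
  have hσW : ∀ Q ∈ QS, σ Q ⊆ W := by
    intro Q hQ s hs
    rw [hW, Finset.mem_biUnion]
    exact ⟨Q, hQ, hs⟩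
  have huW : u ∈ W := hσW Q₀ hQ₀ (hσspec Q₀ hQ₀).1
  have hvW : v ∈ W := hσW Q₀ hQ₀ (hσspec Q₀ hQ₀).2.1
  have hmduk : (md u).card = k := hunif _ (hmdH u huW)
  have hmdvk : (md v).card = k := hunif _ (hmdH v hvW)
  have hmdne : (md u).Nonempty := Finset.card_pos.1 (by omega)
  obtain ⟨x₀, hx₀⟩ := id hmdne
  have hcom : ∀ Q ∈ QS, ∃ x : Fin nX, ∀ b ∈ σ Q, x ∈ md b := by
    intro Q hQ
    obtain ⟨hQmax, -, -⟩ := hQS Q hQ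
    exact clique_common hk hunif hmult hmdH hmdinj hmdadj (σ Q) (hσW Q hQ)
      (hQmax.1.subset (by exact_mod_cast (hσspec Q hQ).2.2.1))
      (le_of_eq (hσspec Q hQ).2.2.2.symm)
  choose xf hxf using hcom
  set xtot : Finset (Fin n) → Fin nX := fun Q =>
    if h : Q ∈ QS then xf Q h else x₀ with hxtot
  -- xtot is injective on QS
  have hinj : Set.InjOn xtot ↑QS := by
    intro Q1 hQ1 Q2 hQ2 hxeq
    rw [Finset.mem_coe] at hQ1 hQ2
    by_contra hne'
    have hx1 : ∀ b ∈ σ Q1 ∪ σ Q2, xtot Q1 ∈ md b := by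
      intro b hb
      rcases Finset.mem_union.1 hb with hb | hb
      · rw [hxtot]; simp only [dif_pos hQ1]; exact hxf Q1 hQ1 b hb
      · rw [hxeq, hxtot]; simp only [dif_pos hQ2]; exact hxf Q2 hQ2 b hb
    have hcl : G.IsClique (↑(σ Q1 ∪ σ Q2) : Set (Fin n)) := by
      apply clique_of_common hmdadj (σ Q1 ∪ σ Q2) ?_ (xtot Q1) hx1
      intro b hb
      rcases Finset.mem_union.1 hb with hb | hb
      · exact hσW Q1 hQ1 hb
      · exact hσW Q2 hQ2 hb
    exact hne' (maxBig_eq hk hp hE3 (hQS Q1 hQ1).1 (hQS Q2 hQ2).1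
      (hσspec Q1 hQ1).2.2.1 (hσspec Q2 hQ2).2.2.1
      (hσspec Q1 hQ1).2.2.2 (hσspec Q2 hQ2).2.2.2 hcl)
  -- image lands in md u ∩ md v, which has at most k-1 elements
  have hmaps : ∀ Q ∈ QS, xtot Q ∈ md u ∩ md v := by
    intro Q hQ
    rw [hxtot]
    simp only [dif_pos hQ]
    exact Finset.mem_inter.2 ⟨hxf Q hQ u (hσspec Q hQ).1, hxf Q hQ v (hσspec Q hQ).2.1⟩
  have hcard2 : QS.card ≤ (md u ∩ md v).card :=
    Finset.card_le_card_of_injOn xtot hmaps hinj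
  have hmdune : md u ≠ md v := hmdinj u huW v hvW hne
  have htcard : (md u ∩ md v).card ≤ k - 1 := by
    have hssub : md u ∩ md v ⊆ md u := Finset.inter_subset_left
    have hne2 : md u ∩ md v ≠ md u := by
      intro hc
      have h3 : md u ⊆ md v := by
        rw [← hc]; exact Finset.inter_subset_right
      exact hmdune (Finset.eq_of_subset_of_card_le h3 (by omega))
    have := Finset.card_lt_card (Finset.ssubset_iff_subset_ne.2 ⟨hssub, hne2⟩)
    omega
  omega

end Beast2


-- ===== part 5 : the construction =====
section Construct

variable {k p n : ℕ} {G : SimpleGraph (Fin n)} [DecidableRel G.Adj]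

lemma main_construct (hk : 2 ≤ k) (hp : 1 ≤ p)
    (hyp : ∀ u v : Fin n, G.Adj u v →
      qc k p ≤ (Finset.univ.filter (fun w => G.Adj u w ∧ G.Adj v w)).card)
    (hloc : ∀ W : Finset (Fin n), W.card ≤ Cc k p →
      IsLG k p (G.induce (↑W : Set (Fin n)))) :
    IsLG k p G := by
  classical
  set X' := (Finset (Fin n)) ⊕ (Fin n × Fin k) with hX'
  set nX := Fintype.card X' with hnX
  set ι : X' ≃ Fin nX := Fintype.equivFin X' with hι
  set Qs : Fin n → Finset (Finset (Fin n)) := fun u =>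
    Finset.univ.filter (fun Q => MaxBig k p G Q ∧ u ∈ Q) with hQs
  have hQsmem : ∀ u Q, Q ∈ Qs u ↔ (MaxBig k p G Q ∧ u ∈ Q) := by
    intro u Q
    rw [hQs, Finset.mem_filter]
    simp
  have hQk : ∀ u, (Qs u).card ≤ k := by
    intro u
    exact maxBig_count hk hp hloc u (Qs u) (fun Q hQ => (hQsmem u Q).1 hQ)
  -- hyperedges before renaming
  set pads : Fin n → Finset (Fin k) := fun u =>
    (Finset.range (k - (Qs u).card)).attachFin
      (by intro i hi; rw [Finset.mem_range] at hi; omega) with hpads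
  have hpadscard : ∀ u, (pads u).card = k - (Qs u).card := by
    intro u
    rw [hpads]
    rw [Finset.card_attachFin, Finset.card_range]
  set ehat : Fin n → Finset X' := fun u =>
    ((Qs u).image Sum.inl) ∪ ((pads u).image (fun i => Sum.inr (u, i))) with hehat
  have hmem_inl : ∀ u Q, Sum.inl Q ∈ ehat u ↔ Q ∈ Qs u := by
    intro u Q
    rw [hehat]
    simp only [Finset.mem_union, Finset.mem_image]
    constructor
    · rintro (⟨Q', hQ', heq⟩ | ⟨i, _, heq⟩)
      · rwa [← Sum.inl_injective heq]
      · exact absurd heq (by simp)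
    · intro h
      exact Or.inl ⟨Q, h, rfl⟩
  have hmem_inr : ∀ u v i, Sum.inr (v, i) ∈ ehat u → v = u := by
    intro u v i h
    rw [hehat] at h
    simp only [Finset.mem_union, Finset.mem_image] at h
    rcases h with ⟨Q', _, heq⟩ | ⟨j, _, heq⟩
    · exact absurd heq (by simp)
    · have := Sum.inr_injective heq
      exact (Prod.ext_iff.1 this.symm).1
  have hehatcard : ∀ u, (ehat u).card = k := by
    intro u
    rw [hehat]
    rw [Finset.card_union_of_disjoint]
    · rw [Finset.card_image_of_injective _ Sum.inl_injective,
        Finset.card_image_of_injective _ (fun a b h => by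
          simpa using (Prod.ext_iff.1 (Sum.inr_injective h)).2), hpadscard]
      have := hQk u
      omega
    · rw [Finset.disjoint_left]
      rintro a ha hb
      obtain ⟨Q, -, rfl⟩ := Finset.mem_image.1 ha
      obtain ⟨i, -, hi⟩ := Finset.mem_image.1 hb
      exact absurd hi (by simp)
  set e : Fin n → Finset (Fin nX) := fun u => (ehat u).image ι with he
  have hecard : ∀ u, (e u).card = k := by
    intro u
    rw [he]
    rw [Finset.card_image_of_injective _ ι.injective]
    exact hehatcard u
  have hmem_e : ∀ u x, x ∈ e u ↔ ι.symm x ∈ ehat u := by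
    intro u x
    rw [he]
    simp only [Finset.mem_image]
    constructor
    · rintro ⟨a, ha, rfl⟩
      rwa [Equiv.symm_apply_apply]
    · intro h
      exact ⟨ι.symm x, h, Equiv.apply_symm_apply _ _⟩
  -- injectivity of e
  have hinj : Function.Injective e := by
    intro u v huv
    by_contra hne
    have hehat_eq : ehat u = ehat v := by
      have := Finset.image_injective ι.injective
      exact this huv
    -- pads must be empty
    have hcards : (Qs u).card = k := by
      by_contra hc
      have hlt : 0 < k - (Qs u).card := by
        have := hQk u
        omega
      have hpne : (pads u).Nonempty := by
        rw [← Finset.card_pos, hpadscard]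
        omega
      obtain ⟨i, hi⟩ := hpne
      have h1 : Sum.inr (u, i) ∈ ehat u := by
        rw [hehat]
        exact Finset.mem_union_right _ (Finset.mem_image_of_mem _ hi)
      rw [hehat_eq] at h1
      exact hne (hmem_inr v u i h1)
    have hQs_eq : Qs u = Qs v := by
      ext Q
      rw [← hmem_inl u Q, ← hmem_inl v Q, hehat_eq]
    have hQsne : (Qs u).Nonempty := Finset.card_pos.1 (by omega)
    obtain ⟨Q, hQ⟩ := hQsne
    have hu := (hQsmem u Q).1 hQ
    have hv := (hQsmem v Q).1 (hQs_eq ▸ hQ)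
    exact no_twins hk hp hloc hne (Qs u) hcards
      (fun Q' hQ' => ⟨((hQsmem u Q').1 hQ').1, ((hQsmem u Q').1 hQ').2,
        ((hQsmem v Q').1 (hQs_eq ▸ hQ')).2⟩)
  set H : Finset (Finset (Fin nX)) := Finset.univ.image e with hH
  have hmemH : ∀ u, e u ∈ H := fun u => Finset.mem_image_of_mem e (Finset.mem_univ u)
  -- uniformity
  have hunif : ∀ ee ∈ H, ee.card = k := by
    intro ee hee
    obtain ⟨u, -, rfl⟩ := Finset.mem_image.1 hee
    exact hecard u
  -- multiplicity
  have hmult : ∀ x y : Fin nX, x ≠ y → (H.filter (fun ee => x ∈ ee ∧ y ∈ ee)).card ≤ p := by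
    intro x y hxy
    set A := Finset.univ.filter (fun u : Fin n => x ∈ e u ∧ y ∈ e u) with hA
    have hsub : H.filter (fun ee => x ∈ ee ∧ y ∈ ee) ⊆ A.image e := by
      intro ee hee
      rw [Finset.mem_filter] at hee
      obtain ⟨hee1, hx, hy⟩ := hee
      obtain ⟨u, -, rfl⟩ := Finset.mem_image.1 hee1
      apply Finset.mem_image_of_mem
      rw [hA, Finset.mem_filter]
      exact ⟨Finset.mem_univ u, hx, hy⟩
    have hAcard : A.card ≤ p := by
      have hAmem : ∀ u ∈ A, ι.symm x ∈ ehat u ∧ ι.symm y ∈ ehat u := by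
        intro u hu
        rw [hA, Finset.mem_filter] at hu
        exact ⟨(hmem_e u x).1 hu.2.1, (hmem_e u y).1 hu.2.2⟩
      rcases hx' : ι.symm x with Q | ⟨w, i⟩
      · rcases hy' : ι.symm y with Q' | ⟨w', i'⟩
        · -- two clique-vertices
          by_cases hAne : A.Nonempty
          · obtain ⟨u₀, hu₀⟩ := hAne
            have h1 := hAmem u₀ hu₀
            rw [hx', hy'] at h1
            have hQu := (hmem_inl u₀ Q).1 h1.1
            have hQ'u := (hmem_inl u₀ Q').1 h1.2
            have hQmax := ((hQsmem u₀ Q).1 hQu).1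
            have hQ'max := ((hQsmem u₀ Q').1 hQ'u).1
            have hQQ' : Q ≠ Q' := by
              intro hc
              apply hxy
              have : ι.symm x = ι.symm y := by rw [hx', hy', hc]
              exact ι.symm.injective this
            have hsub2 : A ⊆ Q ∩ Q' := by
              intro u hu
              have h2 := hAmem u hu
              rw [hx', hy'] at h2
              rw [Finset.mem_inter]
              exact ⟨((hQsmem u Q).1 ((hmem_inl u Q).1 h2.1)).2,
                     ((hQsmem u Q').1 ((hmem_inl u Q').1 h2.2)).2⟩
            exact le_trans (Finset.card_le_card hsub2)
              (maxBig_inter_le hk hp hloc hQmax hQ'max hQQ')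
          · rw [Finset.not_nonempty_iff_eq_empty] at hAne
            rw [hAne]
            simp
        · -- y is a pad
          have hsub2 : A ⊆ {w'} := by
            intro u hu
            have h2 := hAmem u hu
            rw [hy'] at h2
            rw [Finset.mem_singleton]
            exact (hmem_inr u w' i' h2.2).symm
          exact le_trans (Finset.card_le_card hsub2) (by simp; omega)
      · -- x is a pad
        have hsub2 : A ⊆ {w} := by
          intro u hu
          have h2 := hAmem u hu
          rw [hx'] at h2
          rw [Finset.mem_singleton]
          exact (hmem_inr u w i h2.1).symm
        exact le_trans (Finset.card_le_card hsub2) (by simp; omega)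
    calc (H.filter (fun ee => x ∈ ee ∧ y ∈ ee)).card ≤ (A.image e).card :=
          Finset.card_le_card hsub
      _ ≤ A.card := Finset.card_image_le
      _ ≤ p := hAcard
  -- the equivalence
  have hbij : Function.Bijective (fun u : Fin n => (⟨e u, hmemH u⟩ : {ee // ee ∈ H})) := by
    constructor
    · intro u v huv
      exact hinj (congrArg Subtype.val huv)
    · rintro ⟨ee, hee⟩
      obtain ⟨u, -, rfl⟩ := Finset.mem_image.1 hee
      exact ⟨u, rfl⟩
  refine ⟨nX, H, hunif, hmult, Equiv.ofBijective _ hbij, ?_⟩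
  intro u v
  have hval : ∀ u : Fin n, ((Equiv.ofBijective _ hbij u : {ee // ee ∈ H}) : Finset (Fin nX)) = e u :=
    fun u => rfl
  rw [hval, hval]
  constructor
  · intro hadj
    refine ⟨G.ne_of_adj hadj, ?_⟩
    obtain ⟨Q, hQmax, huQ, hvQ⟩ := edge_in_maxBig hk hp hyp hloc hadj
    refine ⟨ι (Sum.inl Q), Finset.mem_inter.2 ⟨?_, ?_⟩⟩
    · rw [hmem_e, Equiv.symm_apply_apply, hmem_inl, hQsmem]
      exact ⟨hQmax, huQ⟩
    · rw [hmem_e, Equiv.symm_apply_apply, hmem_inl, hQsmem]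
      exact ⟨hQmax, hvQ⟩
  · rintro ⟨hne, z, hz⟩
    have hz' := Finset.mem_inter.1 hz
    have h1 := (hmem_e u z).1 hz'.1
    have h2 := (hmem_e v z).1 hz'.2
    rcases hzz : ι.symm z with Q | ⟨w, i⟩
    · rw [hzz] at h1 h2
      have hu := (hQsmem u Q).1 ((hmem_inl u Q).1 h1)
      have hv := (hQsmem v Q).1 ((hmem_inl v Q).1 h2)
      exact hu.1.1 (Finset.mem_coe.2 hu.2) (Finset.mem_coe.2 hv.2) hne
    · rw [hzz] at h1 h2
      have hwu := hmem_inr u w i h1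
      have hwv := hmem_inr v w i h2
      exact absurd (hwu.symm.trans hwv) hne
end Construct


-- ===== part 6 : coding and the family =====
section Coding

open scoped Classical

lemma iso_of_sigma_eq {x y : Σ jj : ℕ, SimpleGraph (Fin jj)} (h : x = y) :
    Nonempty (x.2 ≃g y.2) := by
  subst h
  exact ⟨RelIso.refl _⟩

/-- decode a boolean matrix into a graph -/
def decodeG (C j : ℕ) (hj : j ≤ C) (f : Fin C → Fin C → Bool) : SimpleGraph (Fin j) :=
  SimpleGraph.fromRel (fun a b => f (Fin.castLE hj a) (Fin.castLE hj b) = true)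

/-- the forbidden family, indexed by codes -/
noncomputable def famG (k p C : ℕ) (z : Fin (C + 1) × (Fin C → Fin C → Bool)) :
    Σ jj : ℕ, SimpleGraph (Fin jj) :=
  if IsLG k p (decodeG C z.1 (Fin.is_le z.1) z.2) then ⟨k + 2, Star k⟩
  else ⟨z.1, decodeG C z.1 (Fin.is_le z.1) z.2⟩

lemma famG_not_isLG {k p C : ℕ} (hk : 2 ≤ k)
    (z : Fin (C + 1) × (Fin C → Fin C → Bool)) : ¬ IsLG k p ((famG k p C z).2) := by
  by_cases h : IsLG k p (decodeG C z.1 (Fin.is_le z.1) z.2)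
  · have heq : famG k p C z = ⟨k + 2, Star k⟩ := by
      unfold famG
      rw [if_pos h]
    rw [heq]
    exact not_isLG_star hk
  · have heq : famG k p C z = ⟨z.1, decodeG C z.1 (Fin.is_le z.1) z.2⟩ := by
      unfold famG
      rw [if_neg h]
    rw [heq]
    exact h

lemma famG_covers {k p C : ℕ} (j : ℕ) (hj : j < C + 1) (A : SimpleGraph (Fin j))
    (hA : ¬ IsLG k p A) :
    ∃ z : Fin (C + 1) × (Fin C → Fin C → Bool), Nonempty ((famG k p C z).2 ≃g A) := by
  set f : Fin C → Fin C → Bool := fun a b =>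
    if h : (a : ℕ) < j ∧ (b : ℕ) < j then decide (A.Adj ⟨a, h.1⟩ ⟨b, h.2⟩) else false with hf
  have hdec : decodeG C ((⟨j, hj⟩ : Fin (C + 1)) : ℕ)
      (Fin.is_le (⟨j, hj⟩ : Fin (C + 1))) f = A := by
    apply SimpleGraph.ext
    ext a b
    rw [decodeG, SimpleGraph.fromRel_adj]
    have hfval : ∀ (c d : Fin (((⟨j, hj⟩ : Fin (C + 1)) : ℕ))),
        (f (Fin.castLE (Fin.is_le (⟨j, hj⟩ : Fin (C + 1))) c)
          (Fin.castLE (Fin.is_le (⟨j, hj⟩ : Fin (C + 1))) d) = true) ↔ A.Adj c d := by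
      intro c d
      have hc : ((Fin.castLE (Fin.is_le (⟨j, hj⟩ : Fin (C + 1))) c : Fin C) : ℕ) < j := c.2
      have hd : ((Fin.castLE (Fin.is_le (⟨j, hj⟩ : Fin (C + 1))) d : Fin C) : ℕ) < j := d.2
      rw [hf]
      simp only [dif_pos (And.intro hc hd), decide_eq_true_iff]
      constructor
      · intro h
        convert h using 2 <;> exact rfl
      · intro h
        convert h using 2 <;> exact rfl
    rw [hfval, hfval]
    constructor
    · rintro ⟨hne, h | h⟩
      · exact h
      · exact h.symm
    · intro h
      exact ⟨A.ne_of_adj h, Or.inl h⟩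
  refine ⟨(⟨j, hj⟩, f), ?_⟩
  have hfam : famG k p C (⟨j, hj⟩, f) = ⟨((⟨j, hj⟩ : Fin (C + 1)) : ℕ), A⟩ := by
    unfold famG
    rw [show ((⟨j, hj⟩, f) : Fin (C + 1) × (Fin C → Fin C → Bool)).2 = f from rfl]
    rw [hdec, if_neg hA]
  exact iso_of_sigma_eq hfam

end Coding

end LGAux


/-- Main theorem: for every `k ≥ 2`, `p ≥ 1` there is a finite family of forbidden
graphs `ℱ(k,p)` such that a graph with minimum edge-degree (triangles per edge) at
least `p·k³ + (p−3)·k + 1` is the line graph of a `k`-uniform hypergraph with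
multiplicity at most `p` iff it has no induced subgraph isomorphic to a member of
`ℱ(k,p)`. -/
theorem finite_forbidden_characterization (k p : ℕ) (hk : 2 ≤ k) (hp : 1 ≤ p) :
    ∃ (m : ℕ) (nF : Fin m → ℕ) (F : ∀ i : Fin m, SimpleGraph (Fin (nF i))),
      ∀ (n : ℕ) (G : SimpleGraph (Fin n)) (_ : DecidableRel G.Adj),
        (∀ u v : Fin n, G.Adj u v →
          (p : ℤ) * k ^ 3 + ((p : ℤ) - 3) * k + 1 ≤
            ((Finset.univ.filter (fun w => G.Adj u w ∧ G.Adj v w)).card : ℤ)) →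
        ((∃ (nX : ℕ) (H : Finset (Finset (Fin nX))),
            (∀ e ∈ H, e.card = k) ∧
            (∀ x y : Fin nX, x ≠ y → (H.filter (fun e => x ∈ e ∧ y ∈ e)).card ≤ p) ∧
            ∃ φ : Fin n ≃ {e // e ∈ H},
              ∀ u v : Fin n, G.Adj u v ↔
                (u ≠ v ∧ ((φ u : Finset (Fin nX)) ∩ (φ v : Finset (Fin nX))).Nonempty))
          ↔
          ¬ ∃ (i : Fin m) (s : Set (Fin n)),
              Nonempty ((F i) ≃g (G.induce s))) := by
  classical
  refine ⟨Fintype.card (Fin (LGAux.Cc k p + 1) × (Fin (LGAux.Cc k p) → Fin (LGAux.Cc k p) → Bool)),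
    fun i => (LGAux.famG k p (LGAux.Cc k p) ((Fintype.equivFin _).symm i)).1,
    fun i => (LGAux.famG k p (LGAux.Cc k p) ((Fintype.equivFin _).symm i)).2, ?_⟩
  intro n G instG hyp
  have hyp' : ∀ u v : Fin n, G.Adj u v →
      LGAux.qc k p ≤ (Finset.univ.filter (fun w => G.Adj u w ∧ G.Adj v w)).card := by
    intro u v huv
    have h1 := hyp u v huv
    rw [← LGAux.qc_cast hk hp] at h1
    exact_mod_cast h1
  constructor
  · intro hP hex
    obtain ⟨i, s, ⟨iso⟩⟩ := hex
    have hPL : LGAux.IsLG k p G := hP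
    have h1 : LGAux.IsLG k p (G.induce s) := LGAux.isLG_induce hPL s
    have h2 := LGAux.isLG_of_iso iso.symm h1
    exact LGAux.famG_not_isLG hk _ h2
  · intro hNo
    show LGAux.IsLG k p G
    apply LGAux.main_construct hk hp hyp'
    intro W hWC
    by_contra hnot
    let eW : ↥(↑W : Set (Fin n)) ≃ Fin W.card :=
      (Equiv.subtypeEquivRight (fun x => by simp)).trans W.equivFin
    let A : SimpleGraph (Fin W.card) :=
      SimpleGraph.comap (⇑eW.symm) (G.induce (↑W : Set (Fin n)))
    have isoA : A ≃g (G.induce (↑W : Set (Fin n))) := ⟨eW.symm, Iff.rfl⟩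
    have hAnot : ¬ LGAux.IsLG k p A := fun h => hnot (LGAux.isLG_of_iso isoA h)
    have hjlt : W.card < LGAux.Cc k p + 1 := Nat.lt_succ_of_le hWC
    obtain ⟨z, ⟨isoF⟩⟩ := LGAux.famG_covers W.card hjlt A hAnot
    apply hNo
    refine ⟨Fintype.equivFin _ z, (↑W : Set (Fin n)), ?_⟩
    have hz : (Fintype.equivFin
        (Fin (LGAux.Cc k p + 1) × (Fin (LGAux.Cc k p) → Fin (LGAux.Cc k p) → Bool))).symm
        (Fintype.equivFin _ z) = z := Equiv.symm_apply_apply _ _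
    have heq : LGAux.famG k p (LGAux.Cc k p)
        ((Fintype.equivFin _).symm (Fintype.equivFin _ z)) =
        LGAux.famG k p (LGAux.Cc k p) z := by rw [hz]
    obtain ⟨isoE⟩ := LGAux.iso_of_sigma_eq heq
    exact ⟨(isoE.trans isoF).trans isoA⟩
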